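/- Let p be an odd prime and Δ ∈ 𝔽_p^* such that −Δ is not a square in 𝔽_p. Let w₁, w₂ ∈ 𝔽_p satisfy Δ·(w₁² − w₂²) = −1. Set W₂ = [[w₁, w₂],[w₂, w₁]] and E₁₁ = diag(1, −1). Then for every symmetric matrix B ∈ M₂(𝔽_p): if det(B·E₁₁·W₂ + W₂·E₁₁·B) = 0, then B·E₁₁·W₂ + W₂·E₁₁·B = 0 and moreover B = γ·[[w₂, w₁],[w₁, w₂]] for some scalar γ ∈ 𝔽_p. -/

import Mathlib

open Matrix

/-- Lemma 3.4.3.10: with `Δ(w₁² − w₂²) = −1` and `−Δ` a non-square, if the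
symmetric matrix `B` satisfies `det(B·E₁₁·W₂ + W₂·E₁₁·B) = 0` then in fact
`B·E₁₁·W₂ + W₂·E₁₁·B = 0` and `B = γ·[[w₂,w₁],[w₁,w₂]]` for some scalar `γ`. -/
theorem stmt_4 {p : ℕ} [Fact p.Prime] (hp : p ≠ 2)
    (Δ : ZMod p) (hΔ : Δ ≠ 0) (hns : ¬IsSquare (-Δ))
    (w₁ w₂ : ZMod p) (hw : Δ * (w₁ ^ 2 - w₂ ^ 2) = -1)
    (B : Matrix (Fin 2) (Fin 2) (ZMod p)) (hB : B.IsSymm)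
    (h : (B * !![(1 : ZMod p), 0; 0, -1] * !![w₁, w₂; w₂, w₁]
          + !![w₁, w₂; w₂, w₁] * !![(1 : ZMod p), 0; 0, -1] * B).det = 0) :
    B * !![(1 : ZMod p), 0; 0, -1] * !![w₁, w₂; w₂, w₁]
        + !![w₁, w₂; w₂, w₁] * !![(1 : ZMod p), 0; 0, -1] * B = 0
      ∧ ∃ γ : ZMod p, B = γ • !![w₂, w₁; w₁, w₂] := by
  have h2 : (2 : ZMod p) ≠ 0 := by
    intro h2
    have hd : p ∣ 2 := (ZMod.natCast_eq_zero_iff 2 p).mp (by exact_mod_cast h2)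
    exact hp ((Nat.prime_dvd_prime_iff_eq Fact.out Nat.prime_two).mp hd)
  obtain ⟨a, b, c, hBeq⟩ : ∃ a b c, B = !![a, b; b, c] :=
    ⟨B 0 0, B 0 1, B 1 1, by
      ext i j
      fin_cases i <;> fin_cases j <;> simp <;> exact hB.apply 0 1⟩
  subst hBeq
  have hM : !![a, b; b, c] * !![(1 : ZMod p), 0; 0, -1] * !![w₁, w₂; w₂, w₁]
      + !![w₁, w₂; w₂, w₁] * !![(1 : ZMod p), 0; 0, -1] * !![a, b; b, c]
      = !![2*(a*w₁ - b*w₂), (a-c)*w₂; (a-c)*w₂, 2*(b*w₂ - c*w₁)] := by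
    ext i j
    fin_cases i <;> fin_cases j <;>
      simp [Matrix.mul_apply, Fin.sum_univ_two] <;> ring
  rw [hM] at h ⊢
  rw [Matrix.det_fin_two_of] at h
  have hac : a = c := by
    by_contra hac
    have hac' : a - c ≠ 0 := sub_ne_zero.mpr hac
    apply hns
    refine ⟨Δ * (a*w₁ + c*w₁ - 2*b*w₂) * (a - c)⁻¹, ?_⟩
    have key : Δ * (a*w₁ + c*w₁ - 2*b*w₂)^2 = -((a-c)^2) := by
      linear_combination (-Δ) * h + (a-c)^2 * hw
    field_simp
    linear_combination -key
  subst hac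
  have hu : a*w₁ - b*w₂ = 0 := by
    have h4 : (2 : ZMod p) * 2 ≠ 0 := mul_ne_zero h2 h2
    have hsq : (2*2 : ZMod p) * (a*w₁ - b*w₂)^2 = 0 := by linear_combination -h
    rcases mul_eq_zero.mp hsq with h' | h'
    · exact absurd h' h4
    · exact pow_eq_zero_iff (n := 2) (by norm_num) |>.mp h'
  have hv : b*w₂ - a*w₁ = 0 := by linear_combination -hu
  have hzero : !![2*(a*w₁ - b*w₂), (a-a)*w₂; (a-a)*w₂, 2*(b*w₂ - a*w₁)] = 0 := by
    ext i j
    fin_cases i <;> fin_cases j <;> simp [hu, hv]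
  refine ⟨hzero, ?_⟩
  have hww : w₁ ^ 2 - w₂ ^ 2 ≠ 0 := by
    intro h0
    rw [h0, mul_zero] at hw
    exact (neg_ne_zero.mpr one_ne_zero) hw.symm
  by_cases hw2 : w₂ = 0
  · have hw1 : w₁ ≠ 0 := by
      intro h1; apply hww; rw [h1, hw2]; ring
    have ha0 : a = 0 := by
      have h0 : a * w₁ = 0 := by rw [hw2] at hu; linear_combination hu
      rcases mul_eq_zero.mp h0 with h' | h'
      · exact h'
      · exact absurd h' hw1
    refine ⟨b * w₁⁻¹, ?_⟩
    ext i j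
    fin_cases i <;> fin_cases j <;>
      simp [ha0, hw2, smul_eq_mul] <;> field_simp
  · refine ⟨a * w₂⁻¹, ?_⟩
    ext i j
    fin_cases i <;> fin_cases j <;> simp [smul_eq_mul] <;>
      field_simp <;> linear_combination -hu
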